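/- Let {0}=W^(0) ⊊ W^(1) ⊊ ... ⊊ W^(r)=V be the normalized-entropy subspace chain. Then for every j, max over proper subspaces U1 ⊊ W^(j) of H_N(W^(j)|U1) equals H_N(W^(j)|W^(j-1)); i.e., the worst-case normalized conditional entropy of W^(j) given any proper subspace is attained at W^(j-1). -/

import Mathlib

open scoped BigOperators

open Classical in
/-- Base-2 Shannon entropy of the random variable `f` on the finite probability
space `(Ω, p)`. -/
noncomputable def mapEnt {Ω β : Type*} [Fintype Ω] [Fintype β]
    (p : Ω → ℝ) (f : Ω → β) : ℝ :=
  ∑ b : β, -((∑ ω ∈ Finset.univ.filter (fun ω => f ω = b), p ω) *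
      Real.logb 2 (∑ ω ∈ Finset.univ.filter (fun ω => f ω = b), p ω))

open Classical in
/-- Entropy of a subspace `U` of the space of `F`-valued random variables on `Ω`:
the joint entropy of the collection of all random variables in `U` (equivalently,
of any generating set). -/
noncomputable def subEnt {F Ω : Type*} [Field F] [Fintype F] [Fintype Ω]
    (p : Ω → ℝ) (U : Submodule F (Ω → F)) : ℝ :=
  mapEnt p (fun ω => (fun u : U => (u : Ω → F) ω))

/-- Normalized conditional entropy `H_N(U|W) = (H(W+U) - H(W)) / (dim(W+U) - dim W)`. -/
noncomputable def condNE {F Ω : Type*} [Field F] [Fintype F] [Fintype Ω]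
    (p : Ω → ℝ) (U W : Submodule F (Ω → F)) : ℝ :=
  (subEnt p (W ⊔ U) - subEnt p W) /
    ((Module.finrank F ↥(W ⊔ U) : ℝ) - (Module.finrank F ↥W : ℝ))

/-- `IsNEChain p V r W` says that `⊥ = W 0 ⊊ W 1 ⊊ ... ⊊ W r = V` is a strictly
increasing chain of subspaces of `V` such that for each `j`: (1) among all subspaces
of `V` strictly containing `W j`, `W (j+1)` has the least normalized conditional
entropy conditioned on `W j`, and (2) any subspace of `V` strictly containing `W j`
achieving this minimum is contained in `W (j+1)`. -/
def IsNEChain {F Ω : Type*} [Field F] [Fintype F] [Fintype Ω]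
    (p : Ω → ℝ) (V : Submodule F (Ω → F)) (r : ℕ) (W : ℕ → Submodule F (Ω → F)) : Prop :=
  W 0 = ⊥ ∧ W r = V ∧ (∀ j, j < r → W j < W (j + 1)) ∧ (∀ j, j ≤ r → W j ≤ V) ∧
  ∀ j, j < r →
    (∀ U : Submodule F (Ω → F), U ≤ V → W j < U →
        condNE p (W (j + 1)) (W j) ≤ condNE p U (W j)) ∧
    (∀ U : Submodule F (Ω → F), U ≤ V → W j < U →
        condNE p U (W j) = condNE p (W (j + 1)) (W j) → U ≤ W (j + 1))


set_option linter.unusedSectionVars false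
set_option maxHeartbeats 1000000

section EntropyCore

open Finset Real

variable {Ω α β γ : Type*} [Fintype Ω] [Fintype α] [Fintype β] [Fintype γ]

open Classical in
/-- The weight (probability) of the fiber of `f` over `a`. -/
noncomputable def entWt (p : Ω → ℝ) (f : Ω → α) (a : α) : ℝ :=
  ∑ ω ∈ Finset.univ.filter (fun ω => f ω = a), p ω

lemma mapEnt_eq_entWt (p : Ω → ℝ) (f : Ω → α) :
    mapEnt p f = ∑ a : α, -(entWt p f a * Real.logb 2 (entWt p f a)) := rfl

lemma entWt_nonneg {p : Ω → ℝ} (hp : ∀ ω, 0 ≤ p ω) (f : Ω → α) (a : α) :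
    0 ≤ entWt p f a :=
  Finset.sum_nonneg fun ω _ => hp ω

lemma sum_entWt (p : Ω → ℝ) (f : Ω → α) : ∑ a : α, entWt p f a = ∑ ω, p ω := by
  classical
  simpa [entWt] using Finset.sum_fiberwise (univ : Finset Ω) f p

open Classical in
lemma entWt_comp (p : Ω → ℝ) (f : Ω → α) (σ : α → γ) (z : γ) :
    entWt p (fun ω => σ (f ω)) z = ∑ x ∈ univ.filter (fun x => σ x = z), entWt p f x := by
  classical
  unfold entWt
  rw [Finset.sum_fiberwise_eq_sum_filter (univ : Finset Ω) (univ.filter fun x => σ x = z) f p]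
  apply Finset.sum_congr _ (fun _ _ => rfl)
  ext ω
  simp

lemma entWt_pair_left (p : Ω → ℝ) (f : Ω → α) (g : Ω → β) (x : α) :
    entWt p f x = ∑ y : β, entWt p (fun ω => (f ω, g ω)) (x, y) := by
  classical
  unfold entWt
  rw [← Finset.sum_fiberwise (univ.filter fun ω => f ω = x) g p]
  apply Finset.sum_congr rfl
  intro y _
  apply Finset.sum_congr _ (fun _ _ => rfl)
  ext ω
  simp [Prod.ext_iff, and_comm]

lemma entWt_pair_right (p : Ω → ℝ) (f : Ω → α) (g : Ω → β) (y : β) :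
    entWt p g y = ∑ x : α, entWt p (fun ω => (f ω, g ω)) (x, y) := by
  classical
  unfold entWt
  rw [← Finset.sum_fiberwise (univ.filter fun ω => g ω = y) f p]
  apply Finset.sum_congr rfl
  intro x _
  apply Finset.sum_congr _ (fun _ _ => rfl)
  ext ω
  simp [Prod.ext_iff, and_comm]

end EntropyCore

section EntropyCore2

open Finset Real

variable {Ω α β γ : Type*} [Fintype Ω] [Fintype α] [Fintype β] [Fintype γ]

lemma mapEnt_eq_sum_omega (p : Ω → ℝ) (f : Ω → α) :
    mapEnt p f = ∑ ω, -(p ω * Real.logb 2 (entWt p f (f ω))) := by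
  classical
  rw [mapEnt_eq_entWt]
  rw [← Finset.sum_fiberwise (univ : Finset Ω) f (fun ω => -(p ω * Real.logb 2 (entWt p f (f ω))))]
  apply Finset.sum_congr rfl
  intro a _
  have : ∀ ω ∈ univ.filter (fun ω => f ω = a),
      -(p ω * Real.logb 2 (entWt p f (f ω))) = -(p ω * Real.logb 2 (entWt p f a)) := by
    intro ω hω
    rw [(Finset.mem_filter.1 hω).2]
  rw [Finset.sum_congr rfl this]
  rw [show ∀ S : Finset Ω, ∑ x ∈ S, -(p x * Real.logb 2 (entWt p f a)) =
      -((∑ x ∈ S, p x) * Real.logb 2 (entWt p f a)) from fun S => by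
    rw [Finset.sum_mul, ← Finset.sum_neg_distrib]]
  rfl

lemma mapEnt_congr (p : Ω → ℝ) (f : Ω → α) (g : Ω → β)
    (h : ∀ ω ω', f ω = f ω' ↔ g ω = g ω') :
    mapEnt p f = mapEnt p g := by
  classical
  rw [mapEnt_eq_sum_omega, mapEnt_eq_sum_omega]
  apply Finset.sum_congr rfl
  intro ω _
  have : entWt p f (f ω) = entWt p g (g ω) := by
    unfold entWt
    apply Finset.sum_congr _ (fun _ _ => rfl)
    apply Finset.filter_congr
    intro ω' _
    exact h ω' ω
  rw [this]

end EntropyCore2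

section Submod

open Finset Real

variable {Ω α β γ : Type*} [Fintype Ω] [Fintype α] [Fintype β] [Fintype γ]

lemma mapEnt_submodular (p : Ω → ℝ) (hp : ∀ ω, 0 ≤ p ω) (hpsum : ∑ ω, p ω = 1)
    (f : Ω → α) (g : Ω → β) (σ : α → γ) (τ : β → γ) (hστ : ∀ ω, σ (f ω) = τ (g ω)) :
    mapEnt p (fun ω => (f ω, g ω)) + mapEnt p (fun ω => σ (f ω))
      ≤ mapEnt p f + mapEnt p g := by
  classical
  set qp := entWt p (fun ω => (f ω, g ω)) with hqp_def
  set qf := entWt p f with hqf_def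
  set qg := entWt p g with hqg_def
  set qh := entWt p (fun ω => σ (f ω)) with hqh_def
  have hqp0 : ∀ t, 0 ≤ qp t := entWt_nonneg hp _
  have hqf0 : ∀ x, 0 ≤ qf x := entWt_nonneg hp _
  have hqg0 : ∀ y, 0 ≤ qg y := entWt_nonneg hp _
  have hqh0 : ∀ z, 0 ≤ qh z := entWt_nonneg hp _
  have hfp : ∀ x, qf x = ∑ y, qp (x, y) := fun x => entWt_pair_left p f g x
  have hgp : ∀ y, qg y = ∑ x, qp (x, y) := fun y => entWt_pair_right p f g y
  have hhf : ∀ z, qh z = ∑ x ∈ univ.filter (fun x => σ x = z), qf x :=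
    fun z => entWt_comp p f σ z
  have hhg : ∀ z, qh z = ∑ y ∈ univ.filter (fun y => τ y = z), qg y := by
    intro z
    have he : (fun ω => σ (f ω)) = fun ω => τ (g ω) := funext hστ
    rw [hqh_def, he]
    exact entWt_comp p g τ z
  -- pointwise dominations
  have hqpf : ∀ t : α × β, qp t ≤ qf t.1 := by
    intro t
    have h := Finset.single_le_sum (f := fun y => qp (t.1, y))
      (fun y _ => hqp0 _) (Finset.mem_univ t.2)
    rw [← hfp t.1] at h
    simpa using h
  have hqpg : ∀ t : α × β, qp t ≤ qg t.2 := by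
    intro t
    have h := Finset.single_le_sum (f := fun x => qp (x, t.2))
      (fun x _ => hqp0 _) (Finset.mem_univ t.1)
    rw [← hgp t.2] at h
    simpa using h
  have hfh : ∀ x, qf x ≤ qh (σ x) := by
    intro x
    rw [hhf (σ x)]
    exact Finset.single_le_sum (fun x' _ => hqf0 x') (by simp)
  -- entropy expansions as sums over pairs
  have keyf : ∀ (x : α) (c : ℝ), -(qf x * c) = ∑ y, -(qp (x, y) * c) := by
    intro x c
    rw [hfp x, Finset.sum_mul]
    exact (Finset.sum_neg_distrib _).symm
  have keyg : ∀ (y : β) (c : ℝ), -(qg y * c) = ∑ x, -(qp (x, y) * c) := by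
    intro y c
    rw [hgp y, Finset.sum_mul]
    exact (Finset.sum_neg_distrib _).symm
  have Ef : mapEnt p f = ∑ t : α × β, -(qp t * Real.logb 2 (qf t.1)) := by
    rw [mapEnt_eq_entWt, Fintype.sum_prod_type]
    exact Finset.sum_congr rfl fun x _ => keyf x (Real.logb 2 (qf x))
  have Eg : mapEnt p g = ∑ t : α × β, -(qp t * Real.logb 2 (qg t.2)) := by
    rw [mapEnt_eq_entWt, Fintype.sum_prod_type_right]
    exact Finset.sum_congr rfl fun y _ => keyg y (Real.logb 2 (qg y))
  have Ep : mapEnt p (fun ω => (f ω, g ω)) = ∑ t : α × β, -(qp t * Real.logb 2 (qp t)) :=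
    mapEnt_eq_entWt p _
  have Eh : mapEnt p (fun ω => σ (f ω)) = ∑ t : α × β, -(qp t * Real.logb 2 (qh (σ t.1))) := by
    rw [mapEnt_eq_entWt]
    have step1 : ∀ z, -(qh z * Real.logb 2 (qh z))
        = ∑ x ∈ univ.filter (fun x => σ x = z), -(qf x * Real.logb 2 (qh (σ x))) := by
      intro z
      rw [show (∑ x ∈ univ.filter (fun x => σ x = z), -(qf x * Real.logb 2 (qh (σ x))))
          = ∑ x ∈ univ.filter (fun x => σ x = z), -(qf x * Real.logb 2 (qh z)) from
        Finset.sum_congr rfl fun x hx => by rw [(Finset.mem_filter.1 hx).2]]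
      rw [hhf z, Finset.sum_mul]
      exact (Finset.sum_neg_distrib _).symm
    rw [Finset.sum_congr rfl fun z _ => step1 z]
    rw [Finset.sum_fiberwise (univ : Finset α) σ (fun x => -(qf x * Real.logb 2 (qh (σ x))))]
    rw [Fintype.sum_prod_type]
    exact Finset.sum_congr rfl fun x _ => keyf x (Real.logb 2 (qh (σ x)))
  -- define lower bounds
  set num : α × β → ℝ :=
    fun t => if qp t = 0 then 0 else qp t - qf t.1 * qg t.2 / qh (σ t.1) with hnum_def
  have hterm : ∀ t : α × β, num t / Real.log 2 ≤
      qp t * Real.logb 2 (qp t) + qp t * Real.logb 2 (qh (σ t.1))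
        - qp t * Real.logb 2 (qf t.1) - qp t * Real.logb 2 (qg t.2) := by
    intro t
    by_cases h0 : qp t = 0
    · simp [hnum_def, h0]
    · have hqpt : 0 < qp t := (hqp0 t).lt_of_ne (Ne.symm h0)
      have hqft : 0 < qf t.1 := lt_of_lt_of_le hqpt (hqpf t)
      have hqgt : 0 < qg t.2 := lt_of_lt_of_le hqpt (hqpg t)
      have hqht : 0 < qh (σ t.1) := lt_of_lt_of_le hqft (hfh t.1)
      have hu : (0:ℝ) < qp t * qh (σ t.1) / (qf t.1 * qg t.2) := by positivity
      have hlog := Real.one_sub_inv_le_log_of_pos hu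
      have hexp : qp t * Real.logb 2 (qp t) + qp t * Real.logb 2 (qh (σ t.1))
          - qp t * Real.logb 2 (qf t.1) - qp t * Real.logb 2 (qg t.2)
          = qp t * Real.log (qp t * qh (σ t.1) / (qf t.1 * qg t.2)) / Real.log 2 := by
        rw [Real.logb, Real.logb, Real.logb, Real.logb,
          Real.log_div (by positivity) (by positivity),
          Real.log_mul hqpt.ne' hqht.ne', Real.log_mul hqft.ne' hqgt.ne']
        ring
      rw [hexp, hnum_def]
      simp only [h0, if_false]
      rw [div_le_div_iff_of_pos_right (Real.log_pos (by norm_num))]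
      calc qp t - qf t.1 * qg t.2 / qh (σ t.1)
          = qp t * (1 - (qp t * qh (σ t.1) / (qf t.1 * qg t.2))⁻¹) := by
            field_simp
        _ ≤ qp t * Real.log (qp t * qh (σ t.1) / (qf t.1 * qg t.2)) :=
            mul_le_mul_of_nonneg_left hlog (hqp0 t)
  -- sum of lower bounds is nonnegative
  have hqp_sum : ∑ t : α × β, qp t = 1 := by
    rw [hqp_def, sum_entWt, hpsum]
  have hqh_sum : ∑ z : γ, qh z = 1 := by
    rw [hqh_def, sum_entWt, hpsum]
  have hnum_sum : 0 ≤ ∑ t : α × β, num t := by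
    have hrw : ∑ t : α × β, num t
        = ∑ t ∈ univ.filter (fun t : α × β => qp t ≠ 0),
            (qp t - qf t.1 * qg t.2 / qh (σ t.1)) := by
      rw [Finset.sum_filter]
      apply Finset.sum_congr rfl
      intro t _
      by_cases h0 : qp t = 0 <;> simp [hnum_def, h0]
    rw [hrw, Finset.sum_sub_distrib]
    have h1 : ∑ t ∈ univ.filter (fun t : α × β => qp t ≠ 0), qp t = 1 := by
      rw [Finset.sum_filter_ne_zero, hqp_sum]
    rw [h1]
    have h2 : ∑ t ∈ univ.filter (fun t : α × β => qp t ≠ 0),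
        qf t.1 * qg t.2 / qh (σ t.1) ≤ 1 := by
      set Z := univ.filter (fun z : γ => qh z ≠ 0) with hZ_def
      set T' := univ.filter (fun t : α × β => τ t.2 = σ t.1 ∧ qh (σ t.1) ≠ 0) with hT'_def
      have hTT' : univ.filter (fun t : α × β => qp t ≠ 0) ⊆ T' := by
        intro t ht
        have hqpt : qp t ≠ 0 := (Finset.mem_filter.1 ht).2
        have hqpt' : qp t = ∑ ω ∈ Finset.univ.filter (fun ω => (f ω, g ω) = t), p ω := by
          rw [hqp_def]
          unfold entWt
          exact Finset.sum_congr (by ext ω; simp) (fun _ _ => rfl)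
        have hne : (univ.filter (fun ω => (f ω, g ω) = t)).Nonempty := by
          by_contra hcon
          rw [Finset.not_nonempty_iff_eq_empty] at hcon
          exact hqpt (by rw [hqpt', hcon, Finset.sum_empty])
        obtain ⟨ω, hω⟩ := hne
        have hfg : (f ω, g ω) = t := (Finset.mem_filter.1 hω).2
        have hfω : f ω = t.1 := by rw [← hfg]
        have hgω : g ω = t.2 := by rw [← hfg]
        refine Finset.mem_filter.2 ⟨Finset.mem_univ t, ?_, ?_⟩
        · rw [← hfω, ← hgω]
          exact (hστ ω).symm
        · have : 0 < qh (σ t.1) :=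
            lt_of_lt_of_le ((hqp0 t).lt_of_ne (Ne.symm hqpt)) ((hqpf t).trans (hfh t.1))
          exact this.ne'
      have hsub : ∑ t ∈ univ.filter (fun t : α × β => qp t ≠ 0),
          qf t.1 * qg t.2 / qh (σ t.1) ≤ ∑ t ∈ T', qf t.1 * qg t.2 / qh (σ t.1) :=
        Finset.sum_le_sum_of_subset_of_nonneg hTT'
          (fun t _ _ => by
            have := hqf0 t.1; have := hqg0 t.2; have := hqh0 (σ t.1); positivity)
      have hfiber : ∑ t ∈ T', qf t.1 * qg t.2 / qh (σ t.1) = ∑ z ∈ Z, qh z := by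
        have e1 : T'.filter (fun t => σ t.1 ∈ Z) = T' := by
          apply Finset.filter_eq_self.2
          intro t ht
          have := (Finset.mem_filter.1 ht).2.2
          simp [hZ_def, this]
        have main := Finset.sum_fiberwise_eq_sum_filter T' Z (fun t => σ t.1)
          (fun t => qf t.1 * qg t.2 / qh (σ t.1))
        rw [e1] at main
        rw [← main]
        apply Finset.sum_congr rfl
        intro z hz
        have hqhz : qh z ≠ 0 := (Finset.mem_filter.1 hz).2
        have e2 : T'.filter (fun t => σ t.1 = z)
            = (univ.filter fun x => σ x = z) ×ˢ (univ.filter fun y => τ y = z) := by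
          ext t
          simp only [hT'_def, Finset.mem_filter, Finset.mem_product, Finset.mem_univ,
            true_and]
          constructor
          · rintro ⟨⟨h1', _⟩, h2'⟩
            exact ⟨h2', h1'.trans h2'⟩
          · rintro ⟨h1', h2'⟩
            exact ⟨⟨h2'.trans h1'.symm, by rw [h1']; exact hqhz⟩, h1'⟩
        rw [e2]
        have e3 : ∀ t ∈ (univ.filter fun x => σ x = z) ×ˢ (univ.filter fun y => τ y = z),
            qf t.1 * qg t.2 / qh (σ t.1) = qf t.1 * qg t.2 / qh z := by
          intro t htm
          have := (Finset.mem_filter.1 (Finset.mem_product.1 htm).1).2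
          rw [this]
        rw [Finset.sum_congr rfl e3, Finset.sum_product]
        rw [show (∑ x ∈ univ.filter (fun x => σ x = z),
              ∑ y ∈ univ.filter (fun y => τ y = z), qf x * qg y / qh z)
            = (∑ x ∈ univ.filter (fun x => σ x = z), qf x) *
              (∑ y ∈ univ.filter (fun y => τ y = z), qg y) / qh z from by
          rw [Finset.sum_mul_sum, Finset.sum_div]
          exact Finset.sum_congr rfl fun x _ => by rw [Finset.sum_div]]
        rw [← hhf z, ← hhg z, mul_div_assoc, div_self hqhz, mul_one]
      have hZ1 : ∑ z ∈ Z, qh z ≤ 1 := by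
        calc ∑ z ∈ Z, qh z ≤ ∑ z : γ, qh z :=
              Finset.sum_le_sum_of_subset_of_nonneg (Finset.filter_subset _ _)
                (fun z _ _ => hqh0 z)
          _ = 1 := hqh_sum
      calc ∑ t ∈ univ.filter (fun t : α × β => qp t ≠ 0), qf t.1 * qg t.2 / qh (σ t.1)
            ≤ ∑ t ∈ T', qf t.1 * qg t.2 / qh (σ t.1) := hsub
        _ = ∑ z ∈ Z, qh z := hfiber
        _ ≤ 1 := hZ1
    linarith
  -- conclude
  rw [Ef, Eg, Ep, Eh, ← Finset.sum_add_distrib, ← Finset.sum_add_distrib, ← sub_nonneg,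
    ← Finset.sum_sub_distrib]
  have := hnum_sum
  have hfinal : ∑ t : α × β, num t / Real.log 2 ≤
      ∑ t : α × β, (-(qp t * Real.logb 2 (qf t.1)) + -(qp t * Real.logb 2 (qg t.2))
        - (-(qp t * Real.logb 2 (qp t)) + -(qp t * Real.logb 2 (qh (σ t.1))))) := by
    apply Finset.sum_le_sum
    intro t _
    have := hterm t
    linarith
  have h0 : 0 ≤ ∑ t : α × β, num t / Real.log 2 := by
    rw [← Finset.sum_div]
    exact div_nonneg hnum_sum (Real.log_nonneg (by norm_num))
  linarith

end Submod

section SubspaceLayer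

open Finset

variable {F Ω : Type*} [Field F] [Fintype F] [Fintype Ω]

open Classical in
lemma subEnt_sup_eq_pair (p : Ω → ℝ) (A B : Submodule F (Ω → F)) :
    subEnt p (A ⊔ B) = mapEnt p (fun ω =>
      ((fun a : ↥A => (a : Ω → F) ω), (fun b : ↥B => (b : Ω → F) ω))) := by
  unfold subEnt
  apply mapEnt_congr
  intro ω ω'
  constructor
  · intro h
    have hmem : ∀ v : Ω → F, v ∈ A ⊔ B → v ω = v ω' := fun v hv =>
      congrFun h (⟨v, hv⟩ : ↥(A ⊔ B))
    refine Prod.ext ?_ ?_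
    · funext a
      exact hmem a.1 (le_sup_left (a := A) (b := B) a.2)
    · funext b
      exact hmem b.1 (le_sup_right (a := A) (b := B) b.2)
  · intro h
    funext u
    obtain ⟨a, ha, b, hb, hab⟩ := Submodule.mem_sup.1 u.2
    have hA : (a : Ω → F) ω = a ω' := congrFun (congrArg Prod.fst h) ⟨a, ha⟩
    have hB : (b : Ω → F) ω = b ω' := congrFun (congrArg Prod.snd h) ⟨b, hb⟩
    show (u : Ω → F) ω = (u : Ω → F) ω'
    have : (u : Ω → F) = a + b := hab.symm
    rw [this]
    show a ω + b ω = a ω' + b ω'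
    rw [hA, hB]

open Classical in
lemma subEnt_le_comp (p : Ω → ℝ) {C A : Submodule F (Ω → F)} (hCA : C ≤ A) :
    subEnt p C = mapEnt p (fun ω => (fun c : ↥C =>
      (fun a : ↥A => (a : Ω → F) ω) ⟨c.1, hCA c.2⟩)) := by
  unfold subEnt
  exact mapEnt_congr p _ _ (fun ω ω' => Iff.rfl)

lemma subEnt_submodular (p : Ω → ℝ) (hp : ∀ ω, 0 ≤ p ω) (hpsum : ∑ ω, p ω = 1)
    {A B C : Submodule F (Ω → F)} (hCA : C ≤ A) (hCB : C ≤ B) :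
    subEnt p (A ⊔ B) + subEnt p C ≤ subEnt p A + subEnt p B := by
  classical
  rw [subEnt_sup_eq_pair p A B, subEnt_le_comp p hCA]
  unfold subEnt
  exact mapEnt_submodular p hp hpsum
    (fun ω => (fun a : ↥A => (a : Ω → F) ω)) (fun ω => (fun b : ↥B => (b : Ω → F) ω))
    (fun (v : ↥A → F) => (fun c : ↥C => v ⟨c.1, hCA c.2⟩))
    (fun (v : ↥B → F) => (fun c : ↥C => v ⟨c.1, hCB c.2⟩))
    (fun ω => rfl)

lemma condNE_of_le (p : Ω → ℝ) {A B : Submodule F (Ω → F)} (h : A ≤ B) :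
    condNE p B A = (subEnt p B - subEnt p A) /
      ((Module.finrank F ↥B : ℝ) - (Module.finrank F ↥A : ℝ)) := by
  unfold condNE
  rw [sup_eq_right.2 h]

end SubspaceLayer

/-- Along the normalized-entropy subspace chain, for every `1 ≤ j ≤ r` the maximum of
`H_N(W^(j)|U1)` over proper subspaces `U1 ⊊ W^(j)` equals `H_N(W^(j)|W^(j-1))`,
i.e., the worst case is attained at `U1 = W^(j-1)`. -/
theorem stmt_9 {F Ω : Type*} [Field F] [Fintype F] [Fintype Ω]
    (p : Ω → ℝ) (hp : ∀ ω, 0 ≤ p ω) (hpsum : ∑ ω, p ω = 1)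
    {m : ℕ} (X : Fin m → (Ω → F)) (hX : LinearIndependent F X)
    (V : Submodule F (Ω → F)) (hV : V = Submodule.span F (Set.range X))
    (r : ℕ) (W : ℕ → Submodule F (Ω → F)) (hchain : IsNEChain p V r W)
    (j : ℕ) (hj1 : 1 ≤ j) (hjr : j ≤ r) :
    (∀ U1 : Submodule F (Ω → F), U1 < W j →
        condNE p (W j) U1 ≤ condNE p (W j) (W (j - 1))) ∧
      W (j - 1) < W j := by
  classical
  obtain ⟨h0, hrV, hlt, hleV, hmin⟩ := hchain
  haveI : FiniteDimensional F (Ω → F) := by infer_instance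
  set c : ℕ → ℝ := fun i => condNE p (W (i + 1)) (W i) with hc_def
  have hjeq : j - 1 + 1 = j := by omega
  have hWj1 : W (j - 1) < W j := by
    have := hlt (j - 1) (by omega)
    rwa [hjeq] at this
  -- dimension gaps along the chain
  have hdim : ∀ i, i < r →
      (Module.finrank F ↥(W i) : ℝ) < (Module.finrank F ↥(W (i + 1)) : ℝ) := by
    intro i hir
    exact_mod_cast Submodule.finrank_lt_finrank_of_lt (hlt i hir)
  -- value of c i as an entropy difference
  have hcval : ∀ i, i < r → subEnt p (W (i + 1)) - subEnt p (W i)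
      = c i * ((Module.finrank F ↥(W (i + 1)) : ℝ) - (Module.finrank F ↥(W i) : ℝ)) := by
    intro i hir
    simp only [hc_def]
    rw [condNE_of_le p (le_of_lt (hlt i hir))]
    rw [div_mul_cancel₀ _ (sub_pos.2 (hdim i hir)).ne']
  -- key bound: for any W i ≤ C < W (i+1)
  have hCbound : ∀ i, i < r → ∀ C : Submodule F (Ω → F), W i ≤ C → C < W (i + 1) →
      subEnt p (W (i + 1)) - subEnt p C
        ≤ c i * ((Module.finrank F ↥(W (i + 1)) : ℝ) - (Module.finrank F ↥C : ℝ)) := by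
    intro i hir C hWC hCW
    rcases eq_or_lt_of_le hWC with he | hlt'
    · rw [← he]
      exact le_of_eq (hcval i hir)
    · have hCV : C ≤ V := le_trans (le_of_lt hCW) (hleV (i + 1) hir)
      have hminC := (hmin i hir).1 C hCV hlt'
      rw [condNE_of_le p (le_of_lt hlt')] at hminC
      have hdC : (Module.finrank F ↥(W i) : ℝ) < (Module.finrank F ↥C : ℝ) := by
        exact_mod_cast Submodule.finrank_lt_finrank_of_lt hlt'
      rw [le_div_iff₀ (by linarith)] at hminC
      have he1 := hcval i hir
      set d0 := (Module.finrank F ↥(W i) : ℝ)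
      set d1 := (Module.finrank F ↥(W (i + 1)) : ℝ)
      set dC := (Module.finrank F ↥C : ℝ)
      have expand1 : c i * (dC - d0) = c i * dC - c i * d0 := by ring
      have expand2 : c i * (d1 - d0) = c i * d1 - c i * d0 := by ring
      have expand3 : c i * (d1 - dC) = c i * d1 - c i * dC := by ring
      rw [expand1] at hminC
      rw [expand2] at he1
      rw [expand3]
      linarith
  -- increment lemma
  have hinc : ∀ i, i < r → ∀ A : Submodule F (Ω → F), W i ≤ A →
      subEnt p (A ⊔ W (i + 1)) - subEnt p A
        ≤ c i * ((Module.finrank F ↥(A ⊔ W (i + 1)) : ℝ) - (Module.finrank F ↥A : ℝ)) := by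
    intro i hir A hWA
    by_cases hsub : W (i + 1) ≤ A
    · rw [sup_eq_left.2 hsub]
      simp
    · set C := A ⊓ W (i + 1) with hC_def
      have hWC : W i ≤ C := le_inf hWA (le_of_lt (hlt i hir))
      have hCW : C < W (i + 1) :=
        lt_of_le_of_ne inf_le_right (fun he => hsub (he ▸ inf_le_left))
      have hsubmod := subEnt_submodular p hp hpsum
        (A := A) (B := W (i + 1)) (C := C) inf_le_left inf_le_right
      clear hsub
      have hdimeq : (Module.finrank F ↥(A ⊔ W (i + 1)) : ℝ) - (Module.finrank F ↥A : ℝ)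
          = (Module.finrank F ↥(W (i + 1)) : ℝ) - (Module.finrank F ↥C : ℝ) := by
        have hmod := Submodule.finrank_sup_add_finrank_inf_eq A (W (i + 1))
        have hmod' : (Module.finrank F ↥(A ⊔ W (i + 1)) : ℝ) + (Module.finrank F ↥C : ℝ)
            = (Module.finrank F ↥A : ℝ) + (Module.finrank F ↥(W (i + 1)) : ℝ) := by
          rw [hC_def]
          exact_mod_cast hmod
        linarith
      have hkey := hCbound i hir C hWC hCW
      rw [hdimeq]
      linarith
  -- monotonicity of c along the chain
  have hcstep : ∀ k, k + 1 < r → c k ≤ c (k + 1) := by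
    intro k hk
    have h1 : W k < W (k + 1) := hlt k (by omega)
    have h2 : W (k + 1) < W (k + 1 + 1) := hlt (k + 1) hk
    have hmin' := (hmin k (by omega)).1 (W (k + 1 + 1)) (hleV (k + 1 + 1) hk) (h1.trans h2)
    rw [condNE_of_le p (le_of_lt (h1.trans h2))] at hmin'
    have e1 := hcval k (by omega)
    have e2 := hcval (k + 1) hk
    have d1 := hdim k (by omega)
    have d2 := hdim (k + 1) hk
    set d0 := (Module.finrank F ↥(W k) : ℝ)
    set dA := (Module.finrank F ↥(W (k + 1)) : ℝ)
    set dB := (Module.finrank F ↥(W (k + 1 + 1)) : ℝ)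
    rw [le_div_iff₀ (by linarith)] at hmin'
    -- hmin' : c k * (dB - d0) ≤ subEnt (W (k+2)) - subEnt (W k)
    have expand0 : c k * (dB - d0) = c k * dB - c k * d0 := by ring
    have expand1 : c k * (dA - d0) = c k * dA - c k * d0 := by ring
    have expand2 : c (k + 1) * (dB - dA) = c (k + 1) * dB - c (k + 1) * dA := by ring
    rw [expand0] at hmin'
    rw [expand1] at e1
    rw [expand2] at e2
    have key : c k * (dB - dA) ≤ c (k + 1) * (dB - dA) := by
      have expand3 : c k * (dB - dA) = c k * dB - c k * dA := by ring
      rw [expand3, expand2]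
      linarith
    have hpos : (0:ℝ) < dB - dA := by linarith
    exact le_of_mul_le_mul_right (by linarith [key]) hpos
  have hcmono : ∀ k, k < r → ∀ i, i ≤ k → c i ≤ c k := by
    intro k
    induction k with
    | zero =>
      intro _ i hi
      rw [Nat.le_zero.1 hi]
    | succ n ih =>
      intro hkr i hik
      rcases Nat.eq_or_lt_of_le hik with he | hlt'
      · rw [he]
      · exact (ih (by omega) i (by omega)).trans (hcstep n hkr)
  refine ⟨?_, hWj1⟩
  intro U1 hU1
  -- telescoping sum
  have htel : ∀ i, i ≤ j → subEnt p (U1 ⊔ W i) - subEnt p U1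
      ≤ c (j - 1) * ((Module.finrank F ↥(U1 ⊔ W i) : ℝ) - (Module.finrank F ↥U1 : ℝ)) := by
    intro i
    induction i with
    | zero =>
      intro _
      rw [h0, sup_bot_eq]
      simp
    | succ n ih =>
      intro hnj
      have ihn := ih (by omega)
      have hnr : n < r := by omega
      have hi := hinc n hnr (U1 ⊔ W n) le_sup_right
      have hassoc : (U1 ⊔ W n) ⊔ W (n + 1) = U1 ⊔ W (n + 1) := by
        rw [sup_assoc, sup_eq_right.2 (le_of_lt (hlt n hnr))]
      rw [hassoc] at hi
      have hcc : c n ≤ c (j - 1) := hcmono (j - 1) (by omega) n (by omega)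
      have hdmono : (Module.finrank F ↥(U1 ⊔ W n) : ℝ) ≤ (Module.finrank F ↥(U1 ⊔ W (n + 1)) : ℝ) := by
        exact_mod_cast Submodule.finrank_mono
          (sup_le_sup_left (le_of_lt (hlt n hnr)) U1)
      set dU := (Module.finrank F ↥U1 : ℝ)
      set dn := (Module.finrank F ↥(U1 ⊔ W n) : ℝ)
      set dn1 := (Module.finrank F ↥(U1 ⊔ W (n + 1)) : ℝ)
      have h3 : c n * (dn1 - dn) ≤ c (j - 1) * (dn1 - dn) :=
        mul_le_mul_of_nonneg_right hcc (by linarith)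
      have expand1 : c n * (dn1 - dn) = c n * dn1 - c n * dn := by ring
      have expand2 : c (j - 1) * (dn1 - dn) = c (j - 1) * dn1 - c (j - 1) * dn := by ring
      have expand3 : c (j - 1) * (dn - dU) = c (j - 1) * dn - c (j - 1) * dU := by ring
      have expand4 : c (j - 1) * (dn1 - dU) = c (j - 1) * dn1 - c (j - 1) * dU := by ring
      rw [expand3] at ihn
      rw [expand4]
      rw [expand1, expand2] at h3
      rw [expand1] at hi
      linarith
  have hsupeq : U1 ⊔ W j = W j := sup_eq_right.2 (le_of_lt hU1)
  have hfin := htel j le_rfl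
  rw [hsupeq] at hfin
  have hcj : condNE p (W j) (W (j - 1)) = c (j - 1) := by
    simp only [hc_def]
    rw [hjeq]
  rw [hcj, condNE_of_le p (le_of_lt hU1)]
  have hdU : (Module.finrank F ↥U1 : ℝ) < (Module.finrank F ↥(W j) : ℝ) := by
    exact_mod_cast Submodule.finrank_lt_finrank_of_lt hU1
  rw [div_le_iff₀ (by linarith)]
  exact hfin
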